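/- arXiv:1812.04911 — 3 statements merged into one kernel-verified Lean document; each statement's English description precedes it below -/
import Mathlib

section
/- (Tverberg's theorem) Let d ≥ 1 and r ≥ 1 be integers and let X be a finite set of at least (d+1)(r-1)+1 points in ℝ^d. Then X can be partitioned into r pairwise disjoint sets X_1, …, X_r whose convex hulls all have a point in common, i.e., there exists a point o ∈ ℝ^d with o ∈ conv(X_i) for every i = 1, …, r. -/
section TvAux

private def tvLift (d : ℕ) (x : EuclideanSpace ℝ (Fin d)) (a : Fin (d + 1)) : ℝ :=
  if h : (a : ℕ) < d then x ⟨a, h⟩ else 1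

private def tvU (r : ℕ) (j : Fin r) (k : Fin (r - 1)) : ℝ :=
  (if (j : ℕ) = (k : ℕ) then 1 else 0) - (if (j : ℕ) = r - 1 then 1 else 0)

private noncomputable def tvT (d r : ℕ) (x : EuclideanSpace ℝ (Fin d)) (j : Fin r) :
    EuclideanSpace ℝ (Fin (d + 1) × Fin (r - 1)) :=
  (WithLp.equiv 2 _).symm fun ak => tvLift d x ak.1 * tvU r j ak.2

private lemma tvT_apply (d r : ℕ) (x : EuclideanSpace ℝ (Fin d)) (j : Fin r)
    (ak : Fin (d + 1) × Fin (r - 1)) : tvT d r x j ak = tvLift d x ak.1 * tvU r j ak.2 := rfl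

private lemma esum_apply {α κ : Type*} [Fintype κ] (s : Finset α)
    (f : α → EuclideanSpace ℝ κ) (j : κ) : (∑ i ∈ s, f i) j = ∑ i ∈ s, f i j := by
  exact map_sum (EuclideanSpace.proj j (𝕜 := ℝ)) f s

private lemma tv_if_sum (r : ℕ) (m : ℕ) (hm : m < r) :
    ∑ j : Fin r, (if (j : ℕ) = m then (1 : ℝ) else 0) = 1 := by
  rw [Finset.sum_eq_single (⟨m, hm⟩ : Fin r)]
  · simp
  · intro j _ hj
    simp only [ite_eq_right_iff]
    intro hjm
    exact absurd (Fin.ext hjm) hj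
  · simp

private lemma tvU_sum (r : ℕ) (hr : 1 ≤ r) (k : Fin (r - 1)) :
    ∑ j : Fin r, tvU r j k = 0 := by
  unfold tvU
  rw [Finset.sum_sub_distrib, tv_if_sum r k (lt_of_lt_of_le k.isLt (Nat.sub_le r 1)),
    tv_if_sum r (r - 1) (by omega), sub_self]

private lemma tvT_sum (d r : ℕ) (hr : 1 ≤ r) (x : EuclideanSpace ℝ (Fin d)) :
    ∑ j : Fin r, tvT d r x j = 0 := by
  apply PiLp.ext
  intro ak
  rw [esum_apply]
  simp only [tvT_apply]
  rw [← Finset.mul_sum, tvU_sum r hr ak.2, mul_zero]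
  rfl

end TvAux

open RealInnerProductSpace


private lemma seg_lt {V : Type*} [NormedAddCommGroup V] [InnerProductSpace ℝ V] {p b : V}
    (h : ⟪p, b - p⟫ < 0) : ∃ t : ℝ, 0 ≤ t ∧ t ≤ 1 ∧ ‖(1 - t) • p + t • b‖ < ‖p‖ := by
  have hbp : b - p ≠ 0 := by
    intro h0
    rw [h0, inner_zero_right] at h
    exact lt_irrefl 0 h
  set c : ℝ := ⟪p, b - p⟫ with hc
  set B : ℝ := ‖b - p‖ ^ 2 with hB
  have hBpos : 0 < B := by rw [hB]; exact pow_pos (norm_pos_iff.mpr hbp) 2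
  set t : ℝ := min 1 (-c / B) with ht
  have ht0 : 0 < t := lt_min one_pos (div_pos (by linarith) hBpos)
  have ht1 : t ≤ 1 := min_le_left _ _
  have htB : t * B ≤ -c := by
    have : t ≤ -c / B := min_le_right _ _
    calc t * B ≤ (-c / B) * B := by nlinarith
    _ = -c := by field_simp
  refine ⟨t, le_of_lt ht0, ht1, ?_⟩
  have hq : (1 - t) • p + t • b = p + t • (b - p) := by
    rw [smul_sub, sub_smul, one_smul]; abel
  rw [hq]
  have hnorm : ‖p + t • (b - p)‖ ^ 2 = ‖p‖ ^ 2 + 2 * (t * c) + t ^ 2 * B := by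
    rw [norm_add_sq_real, real_inner_smul_right, norm_smul, mul_pow, Real.norm_eq_abs, sq_abs]
  have hlt : ‖p + t • (b - p)‖ ^ 2 < ‖p‖ ^ 2 := by nlinarith
  exact lt_of_pow_lt_pow_left₀ 2 (norm_nonneg p) hlt

theorem colorful_caratheodory {V : Type} [NormedAddCommGroup V] [InnerProductSpace ℝ V]
    [FiniteDimensional ℝ V] {n : ℕ} (hn : Module.finrank ℝ V + 1 = n)
    (A : Fin n → Finset V) (hA : ∀ i, (0 : V) ∈ convexHull ℝ (A i : Set V)) :
    ∃ g : Fin n → V, (∀ i, g i ∈ A i) ∧ (0 : V) ∈ convexHull ℝ (Set.range g) := by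
  classical
  subst hn
  have hAne : ∀ i, (A i).Nonempty := by
    intro i
    have h := (convexHull_nonempty_iff (𝕜 := ℝ)).mp ⟨0, hA i⟩
    rwa [Finset.coe_nonempty] at h
  set S : Finset (Fin (Module.finrank ℝ V + 1) → V) := Fintype.piFinset A with hS
  have hSne : S.Nonempty := ⟨fun i => (hAne i).choose, Fintype.mem_piFinset.mpr
    fun i => (hAne i).choose_spec⟩
  obtain ⟨g₀, hg₀S, hg₀min⟩ := S.exists_min_image
    (fun g => Metric.infDist (0 : V) (convexHull ℝ (Set.range g))) hSne
  set K : Set V := convexHull ℝ (Set.range g₀) with hK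
  have hKcomp : IsCompact K := (Set.finite_range g₀).isCompact_convexHull ℝ
  have hKne : K.Nonempty := ⟨g₀ 0, subset_convexHull ℝ _ (Set.mem_range_self 0)⟩
  obtain ⟨p, hpK, hpd⟩ := hKcomp.exists_infDist_eq_dist hKne 0
  by_cases hp0 : p = 0
  · exact ⟨g₀, fun i => Fintype.mem_piFinset.mp hg₀S i, hp0 ▸ hpK⟩
  exfalso
  have hpnorm : 0 < ‖p‖ := norm_pos_iff.mpr hp0
  have hval : Metric.infDist (0 : V) K = ‖p‖ := by rw [hpd, dist_zero_left]
  have hmin : ∀ w ∈ K, ‖p‖ ≤ ‖w‖ := by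
    intro w hw
    have h1 := Metric.infDist_le_dist_of_mem hw (x := (0 : V))
    rwa [hval, dist_zero_left] at h1
  have hvar : ∀ w ∈ K, ‖p‖ ^ 2 ≤ ⟪p, w⟫ := by
    intro w hw
    by_contra hlt
    push_neg at hlt
    have hc : ⟪p, w - p⟫ < 0 := by
      rw [inner_sub_right, real_inner_self_eq_norm_sq]; linarith
    obtain ⟨t, hts0, hts1, hq⟩ := seg_lt hc
    have hqK : (1 - t) • p + t • w ∈ K :=
      (convex_convexHull ℝ _) hpK hw (by linarith) hts0 (by ring)
    exact absurd (hmin _ hqK) (not_le.mpr hq)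
  obtain ⟨ι, hfin, z, w, hz_range, hz_ai, hw_pos, hw_sum, hw_comb⟩ :=
    eq_pos_convex_span_of_mem_convexHull hpK
  have hzK : ∀ i, z i ∈ K := fun i => subset_convexHull ℝ _ (hz_range (Set.mem_range_self i))
  have hzi : ∀ i, ⟪p, z i⟫ = ‖p‖ ^ 2 := by
    have hsum : ∑ i, w i * (⟪p, z i⟫ - ‖p‖ ^ 2) = 0 := by
      have h1 : ⟪p, ∑ i, w i • z i⟫ = ‖p‖ ^ 2 := by
        rw [hw_comb, real_inner_self_eq_norm_sq]
      rw [inner_sum] at h1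
      simp only [real_inner_smul_right] at h1
      calc ∑ i, w i * (⟪p, z i⟫ - ‖p‖ ^ 2)
          = (∑ i, w i * ⟪p, z i⟫) - (∑ i, w i) * ‖p‖ ^ 2 := by
            rw [Finset.sum_mul, ← Finset.sum_sub_distrib]; ring_nf
            exact Finset.sum_congr rfl fun _ _ => by ring
        _ = 0 := by rw [h1, hw_sum]; ring
    intro i
    have hterm : ∀ j ∈ Finset.univ, 0 ≤ w j * (⟪p, z j⟫ - ‖p‖ ^ 2) :=
      fun j _ => mul_nonneg (le_of_lt (hw_pos j)) (sub_nonneg.mpr (hvar _ (hzK j)))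
    have := (Finset.sum_eq_zero_iff_of_nonneg hterm).mp hsum i (Finset.mem_univ i)
    rcases mul_eq_zero.mp this with h | h
    · exact absurd h (ne_of_gt (hw_pos i))
    · linarith [sub_eq_zero.mp h]
  have hcard : Fintype.card ι < Module.finrank ℝ V + 1 := by
    have hle : Fintype.card ι ≤ Module.finrank ℝ V + 1 := by
      have h1 := hz_ai.card_le_finrank_succ
      have h2 : Module.finrank ℝ ↥(vectorSpan ℝ (Set.range z)) ≤ Module.finrank ℝ V :=
        Submodule.finrank_le _
      omega
    rcases lt_or_eq_of_le hle with h | h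
    · exact h
    · exfalso
      have htop : affineSpan ℝ (Set.range z) = ⊤ :=
        hz_ai.affineSpan_eq_top_iff_card_eq_finrank_add_one.mpr h
      have h0 : (0 : V) ∈ affineSpan ℝ (Set.range z) := htop ▸ AffineSubspace.mem_top ℝ V 0
      obtain ⟨w', hw'sum, hw'comb⟩ := eq_affineCombination_of_mem_affineSpan_of_fintype h0
      have h0' : (0 : V) = ∑ i, w' i • z i := by
        rw [hw'comb, Finset.affineCombination_eq_linear_combination _ _ _ hw'sum]
      have : (0 : ℝ) = ‖p‖ ^ 2 := by
        have := congrArg (fun v => ⟪p, v⟫) h0'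
        simp only [inner_zero_right, inner_sum, real_inner_smul_right] at this
        simp only [hzi] at this
        rw [← Finset.sum_mul, hw'sum, one_mul] at this
        exact this
      nlinarith
  choose f hf using fun i => hz_range (Set.mem_range_self i)
  have hfree : ∃ i₀, ∀ i : ι, f i ≠ i₀ := by
    by_contra h
    push_neg at h
    have hsurj : Function.Surjective f := fun i₀ => h i₀
    have hcs := Fintype.card_le_of_surjective f hsurj
    rw [Fintype.card_fin] at hcs
    omega
  obtain ⟨i₀, hi₀⟩ := hfree
  have hb : ∃ b ∈ A i₀, ⟪p, b⟫ ≤ 0 := by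
    by_contra h
    push_neg at h
    have hcvx : Convex ℝ {x : V | 0 < ⟪p, x⟫} := by
      refine convex_halfSpace_gt ⟨fun x y => inner_add_right p x y, fun c x => ?_⟩ 0
      exact real_inner_smul_right p x c
    have hsub : (A i₀ : Set V) ⊆ {x : V | 0 < ⟪p, x⟫} := fun x hx => h x hx
    have := convexHull_min hsub hcvx (hA i₀)
    simp only [Set.mem_setOf_eq, inner_zero_right] at this
    exact lt_irrefl 0 this
  obtain ⟨b, hbA, hbp⟩ := hb
  set g₁ : Fin (Module.finrank ℝ V + 1) → V := Function.update g₀ i₀ b with hg₁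
  have hg₁S : g₁ ∈ S := by
    rw [Fintype.mem_piFinset]
    intro j
    by_cases hj : j = i₀
    · subst hj; simp [hg₁, hbA]
    · rw [hg₁, Function.update_of_ne hj]
      exact Fintype.mem_piFinset.mp hg₀S j
  have hzK₁ : ∀ i, z i ∈ Set.range g₁ := by
    intro i
    refine ⟨f i, ?_⟩
    rw [hg₁, Function.update_of_ne (hi₀ i), hf i]
  have hpK₁ : p ∈ convexHull ℝ (Set.range g₁) :=
    mem_convexHull_of_exists_fintype w z (fun i => le_of_lt (hw_pos i)) hw_sum hzK₁ hw_comb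
  have hbK₁ : b ∈ convexHull ℝ (Set.range g₁) :=
    subset_convexHull ℝ _ ⟨i₀, by rw [hg₁, Function.update_self]⟩
  have hcpb : ⟪p, b - p⟫ < 0 := by
    rw [inner_sub_right, real_inner_self_eq_norm_sq]
    nlinarith
  obtain ⟨t, hts0, hts1, hq⟩ := seg_lt hcpb
  have hqK₁ : (1 - t) • p + t • b ∈ convexHull ℝ (Set.range g₁) :=
    (convex_convexHull ℝ _) hpK₁ hbK₁ (by linarith) hts0 (by ring)
  have h1 : Metric.infDist (0 : V) (convexHull ℝ (Set.range g₁)) < ‖p‖ :=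
    lt_of_le_of_lt (by simpa [dist_zero_left] using Metric.infDist_le_dist_of_mem (x := (0:V)) hqK₁) hq
  have h2 := hg₀min g₁ hg₁S
  rw [hval] at h2
  exact absurd h1 (not_lt.mpr h2)


/-- **Tverberg's theorem.** Any set of at least `(d+1)(r-1)+1` points in `ℝ^d`
can be partitioned into `r` pairwise disjoint sets whose convex hulls share a
common point. -/
theorem tverberg (d r : ℕ) (hd : 1 ≤ d) (hr : 1 ≤ r)
    (X : Finset (EuclideanSpace ℝ (Fin d)))
    (hcard : (d + 1) * (r - 1) + 1 ≤ X.card) :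
    ∃ P : Fin r → Finset (EuclideanSpace ℝ (Fin d)),
      (∀ i j, i ≠ j → Disjoint (P i) (P j)) ∧
      (X : Set (EuclideanSpace ℝ (Fin d))) = ⋃ i, ↑(P i) ∧
      ∃ o : EuclideanSpace ℝ (Fin d),
        ∀ i, o ∈ convexHull ℝ (↑(P i) : Set (EuclideanSpace ℝ (Fin d))) := by
  classical
  set n : ℕ := (d + 1) * (r - 1) + 1 with hn_def
  -- choose exactly n points of X
  obtain ⟨Y, hYX, hYcard⟩ := X.exists_subset_card_eq (n := n) hcard
  have hYc : Fintype.card {x // x ∈ Y} = n := by rw [Fintype.card_coe]; exact hYcard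
  let eY : {x // x ∈ Y} ≃ Fin n := Fintype.equivFinOfCardEq hYc
  let q : Fin n → EuclideanSpace ℝ (Fin d) := fun i => (eY.symm i : EuclideanSpace ℝ (Fin d))
  have hq_inj : Function.Injective q := fun i j h => eY.symm.injective (Subtype.ext h)
  have hqX : ∀ i, q i ∈ X := fun i => hYX (eY.symm i).2
  -- the Sarkaria configuration
  let A : Fin n → Finset (EuclideanSpace ℝ (Fin (d + 1) × Fin (r - 1))) :=
    fun i => Finset.image (tvT d r (q i)) Finset.univ
  have hrR : (0 : ℝ) < (r : ℝ) := by exact_mod_cast hr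
  have hA0 : ∀ i, (0 : EuclideanSpace ℝ (Fin (d + 1) × Fin (r - 1))) ∈
      convexHull ℝ (A i : Set (EuclideanSpace ℝ (Fin (d + 1) × Fin (r - 1)))) := by
    intro i
    apply mem_convexHull_of_exists_fintype (fun _ : Fin r => (r : ℝ)⁻¹) (tvT d r (q i))
    · intro j; positivity
    · rw [Finset.sum_const, Finset.card_univ, Fintype.card_fin, nsmul_eq_mul]
      field_simp
    · exact fun j => Finset.mem_coe.mpr (Finset.mem_image_of_mem _ (Finset.mem_univ j))
    · rw [← Finset.smul_sum, tvT_sum d r hr (q i), smul_zero]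
  have hW_rank : Module.finrank ℝ (EuclideanSpace ℝ (Fin (d + 1) × Fin (r - 1))) + 1 = n := by
    rw [finrank_euclideanSpace, Fintype.card_prod, Fintype.card_fin, Fintype.card_fin, hn_def]
  -- colorful Caratheodory
  obtain ⟨g, hgA, hg0⟩ := colorful_caratheodory hW_rank A hA0
  choose c hcm hc using fun i => Finset.mem_image.mp (hgA i)
  -- extract convex weights
  rw [convexHull_range_eq_exists_affineCombination] at hg0
  obtain ⟨s, w, hw0, hw1, hcomb⟩ := hg0
  set l : Fin n → ℝ := fun i => if i ∈ s then w i else 0 with hl_def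
  have hl0 : ∀ i, 0 ≤ l i := by
    intro i
    by_cases h : i ∈ s <;> simp [hl_def, h, hw0 i]
  have hl1 : ∑ i, l i = 1 := by
    rw [hl_def]
    simp only [Finset.sum_ite_mem, Finset.univ_inter]
    exact hw1
  have hlcomb : ∑ i, l i • g i = 0 := by
    have h2 : ∀ i, l i • g i = if i ∈ s then w i • g i else 0 := by
      intro i; by_cases h : i ∈ s <;> simp [hl_def, h]
    simp_rw [h2]
    rw [Finset.sum_ite_mem, Finset.univ_inter,
      ← Finset.affineCombination_eq_linear_combination s g w hw1, hcomb]
  -- coordinate equations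
  have hE : ∀ (a : Fin (d + 1)) (k : Fin (r - 1)),
      ∑ i, l i * (tvLift d (q i) a * tvU r (c i) k) = 0 := by
    intro a k
    have h := congrArg (fun (v : EuclideanSpace ℝ (Fin (d + 1) × Fin (r - 1))) => v (a, k)) hlcomb
    simp only at h
    rw [esum_apply] at h
    have h3 : ∀ i : Fin n, (l i • g i) (a, k) = l i * (tvLift d (q i) a * tvU r (c i) k) := by
      intro i
      rw [← hc i]
      rfl
    simp_rw [h3] at h
    simpa using h
  -- color classes
  let jl : Fin r := ⟨r - 1, by omega⟩
  let jk : Fin (r - 1) → Fin r := fun k => ⟨(k : ℕ), lt_of_lt_of_le k.isLt (Nat.sub_le r 1)⟩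
  let cls : Fin r → Finset (Fin n) := fun j => Finset.univ.filter (fun i => c i = j)
  have hsplit : ∀ (F : Fin n → ℝ) (k : Fin (r - 1)),
      ∑ i, F i * tvU r (c i) k = (∑ i ∈ cls (jk k), F i) - ∑ i ∈ cls jl, F i := by
    intro F k
    rw [Finset.sum_filter, Finset.sum_filter, ← Finset.sum_sub_distrib]
    apply Finset.sum_congr rfl
    intro i _
    have h1 : (c i = jk k) ↔ ((c i : ℕ) = (k : ℕ)) := by
      rw [Fin.ext_iff]
    have h2 : (c i = jl) ↔ ((c i : ℕ) = r - 1) := by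
      rw [Fin.ext_iff]
    unfold tvU
    simp only [h1, h2]
    split_ifs <;> ring
  -- masses
  let m : Fin r → ℝ := fun j => ∑ i ∈ cls j, l i
  have hm_k : ∀ k : Fin (r - 1), m (jk k) = m jl := by
    intro k
    have h := hE ⟨d, by omega⟩ k
    have hlift : ∀ x : EuclideanSpace ℝ (Fin d), tvLift d x ⟨d, by omega⟩ = 1 := by
      intro x
      unfold tvLift
      rw [dif_neg (lt_irrefl d)]
    simp_rw [hlift, one_mul] at h
    rw [hsplit l k] at h
    exact sub_eq_zero.mp h
  have hm_all : ∀ j, m j = m jl := by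
    intro j
    by_cases hj : (j : ℕ) = r - 1
    · rw [show j = jl from Fin.ext hj]
    · have hjlt : (j : ℕ) < r - 1 := by
        have := j.isLt
        omega
      have : j = jk ⟨(j : ℕ), hjlt⟩ := Fin.ext rfl
      rw [this, hm_k]
  have hm_l : m jl = (r : ℝ)⁻¹ := by
    have htot : ∑ j : Fin r, m j = 1 := by
      rw [← hl1]
      exact Finset.sum_fiberwise Finset.univ c l
    rw [Finset.sum_congr rfl (fun j _ => hm_all j), Finset.sum_const, Finset.card_univ,
      Fintype.card_fin, nsmul_eq_mul] at htot
    field_simp at htot ⊢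
    linarith
  -- partial sums (vectors)
  let sv : Fin r → EuclideanSpace ℝ (Fin d) := fun j => ∑ i ∈ cls j, l i • q i
  have hsv_k : ∀ k : Fin (r - 1), sv (jk k) = sv jl := by
    intro k
    apply PiLp.ext
    intro a'
    have h := hE (Fin.castSucc a') k
    have hlift : ∀ x : EuclideanSpace ℝ (Fin d), tvLift d x (Fin.castSucc a') = x a' := by
      intro x
      unfold tvLift
      simp [a'.isLt]
    simp_rw [hlift] at h
    have h' : ∑ i, (l i * q i a') * tvU r (c i) k = 0 := by
      rw [← h]
      apply Finset.sum_congr rfl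
      intro i _
      ring
    rw [hsplit (fun i => l i * q i a') k] at h'
    have h'' := sub_eq_zero.mp h'
    show (∑ i ∈ cls (jk k), l i • q i) a' = (∑ i ∈ cls jl, l i • q i) a'
    rw [esum_apply, esum_apply]
    have happ : ∀ (i : Fin n), (l i • q i) a' = l i * q i a' := fun i => rfl
    simp_rw [happ]
    exact h''
  have hsv_all : ∀ j, sv j = sv jl := by
    intro j
    by_cases hj : (j : ℕ) = r - 1
    · rw [show j = jl from Fin.ext hj]
    · have hjlt : (j : ℕ) < r - 1 := by
        have := j.isLt
        omega
      have : j = jk ⟨(j : ℕ), hjlt⟩ := Fin.ext rfl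
      rw [this, hsv_k]
  -- the common point
  set o : EuclideanSpace ℝ (Fin d) := (r : ℝ) • sv jl with ho_def
  -- the coloring of all of X
  let col : EuclideanSpace ℝ (Fin d) → Fin r := fun x =>
    if hx : ∃ i, q i = x then c hx.choose else jl
  have hcol : ∀ i, col (q i) = c i := by
    intro i
    have hx : ∃ i', q i' = q i := ⟨i, rfl⟩
    simp only [col, dif_pos hx]
    rw [hq_inj hx.choose_spec]
  set P : Fin r → Finset (EuclideanSpace ℝ (Fin d)) :=
    fun j => X.filter (fun x => col x = j) with hP_def
  refine ⟨P, ?_, ?_, o, ?_⟩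
  · intro i j hij
    rw [Finset.disjoint_left]
    intro x hxi hxj
    rw [hP_def, Finset.mem_filter] at hxi hxj
    exact hij (hxi.2 ▸ hxj.2 ▸ rfl)
  · ext x
    simp only [Finset.mem_coe, Set.mem_iUnion, hP_def, Finset.mem_filter]
    constructor
    · intro hx
      exact ⟨col x, hx, rfl⟩
    · rintro ⟨j, hx, -⟩
      exact hx
  · intro j
    have hmem : ∀ i ∈ cls j, q i ∈ (P j : Set (EuclideanSpace ℝ (Fin d))) := by
      intro i hi
      rw [Finset.mem_coe, hP_def, Finset.mem_filter]
      refine ⟨hqX i, ?_⟩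
      rw [hcol i]
      exact (Finset.mem_filter.mp hi).2
    have hpos : 0 < ∑ i ∈ cls j, l i := by
      have : ∑ i ∈ cls j, l i = (r : ℝ)⁻¹ := by
        rw [show ∑ i ∈ cls j, l i = m j from rfl, hm_all j, hm_l]
      rw [this]
      positivity
    have hcm := Finset.centerMass_mem_convexHull (cls j) (fun i _ => hl0 i) hpos hmem
    have heq : (cls j).centerMass l q = o := by
      rw [Finset.centerMass, show ∑ i ∈ cls j, l i = m j from rfl, hm_all j, hm_l,
        show ∑ i ∈ cls j, l i • q i = sv j from rfl, hsv_all j, inv_inv, ho_def]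
    rwa [heq] at hcm
end

section
/- Let V ⊆ ℝ^d be a set of exactly 2(d+1) points in general position. Then there is at most one partition of V into two disjoint (d+1)-element sets F and G such that conv(F) ⊆ conv(G); namely, if such a nested partition exists, the outer set G must satisfy conv(G) = conv(V). -/
/-- A set `Y` of points in `ℝ^d` is in general position if every subset of size
at most `d+1` is affinely independent. -/
def InGeneralPosition (d : ℕ) (Y : Set (EuclideanSpace ℝ (Fin d))) : Prop :=
  ∀ s : Finset (EuclideanSpace ℝ (Fin d)), ↑s ⊆ Y → s.card ≤ d + 1 →
    AffineIndependent ℝ (fun p : s => (p : EuclideanSpace ℝ (Fin d)))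

open Set

/-- The outer hull equals the hull of the whole set. -/
lemma outer_hull_eq_aux (d : ℕ) (F G V : Finset (EuclideanSpace ℝ (Fin d)))
    (hFG : (↑F ∪ ↑G : Set (EuclideanSpace ℝ (Fin d))) = ↑V)
    (hsub : convexHull ℝ (↑F : Set (EuclideanSpace ℝ (Fin d))) ⊆
      convexHull ℝ (↑G : Set (EuclideanSpace ℝ (Fin d)))) :
    convexHull ℝ (↑G : Set (EuclideanSpace ℝ (Fin d))) =
      convexHull ℝ (↑V : Set (EuclideanSpace ℝ (Fin d))) := by
  apply le_antisymm
  · exact convexHull_mono (by rw [← hFG]; exact subset_union_right)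
  · rw [← hFG]
    apply convexHull_min _ (convex_convexHull ℝ _)
    exact union_subset ((subset_convexHull ℝ _).trans hsub) (subset_convexHull ℝ _)

/-- Uniqueness of the outer set. -/
lemma G_unique_aux (d : ℕ) (V G G' : Finset (EuclideanSpace ℝ (Fin d)))
    (hV : V.card = 2 * (d + 1))
    (hgp : InGeneralPosition d (↑V : Set (EuclideanSpace ℝ (Fin d))))
    (hGV : ↑G ⊆ (↑V : Set (EuclideanSpace ℝ (Fin d))))
    (hGc : G.card = d + 1) (hG'c : G'.card = d + 1)
    (hGeq : convexHull ℝ (↑G : Set (EuclideanSpace ℝ (Fin d))) =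
      convexHull ℝ (↑V : Set (EuclideanSpace ℝ (Fin d))))
    (hG'eq : convexHull ℝ (↑G' : Set (EuclideanSpace ℝ (Fin d))) =
      convexHull ℝ (↑V : Set (EuclideanSpace ℝ (Fin d)))) :
    G = G' := by
  classical
  by_contra hne
  set T := G ∩ G' with hT
  have hTG : T ⊆ G := Finset.inter_subset_left
  have hTcard : T.card ≤ d := by
    by_contra h
    push_neg at h
    have : T.card = d + 1 := le_antisymm (hGc ▸ Finset.card_le_card hTG) h
    have hTG2 : T = G := Finset.eq_of_subset_of_card_le hTG (by omega)
    have hGG' : G ⊆ G' := by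
      intro x hx
      have : x ∈ T := hTG2 ▸ hx
      exact (Finset.mem_inter.1 this).2
    exact hne (Finset.eq_of_subset_of_card_le hGG' (by omega))
  -- extreme points lie in T
  have hE : (convexHull ℝ (↑V : Set (EuclideanSpace ℝ (Fin d)))).extremePoints ℝ ⊆ ↑T := by
    intro x hx
    rw [hT, Finset.coe_inter]
    constructor
    · exact (hGeq ▸ extremePoints_convexHull_subset) hx
    · exact (hG'eq ▸ extremePoints_convexHull_subset) hx
  -- conv V = conv of extreme points (Krein–Milman for polytopes)
  have hcomp : IsCompact (convexHull ℝ (↑V : Set (EuclideanSpace ℝ (Fin d)))) :=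
    V.finite_toSet.isCompact_convexHull ℝ
  have hEfin : ((convexHull ℝ (↑V : Set (EuclideanSpace ℝ (Fin d)))).extremePoints ℝ).Finite :=
    V.finite_toSet.subset extremePoints_convexHull_subset
  have hKM := closure_convexHull_extremePoints hcomp (convex_convexHull ℝ _)
  rw [(hEfin.isClosed_convexHull ℝ).closure_eq] at hKM
  -- everything lies in the affine span of T
  have hVspan : (↑V : Set (EuclideanSpace ℝ (Fin d))) ⊆
      affineSpan ℝ (↑T : Set (EuclideanSpace ℝ (Fin d))) := by
    intro x hx
    have : x ∈ convexHull ℝ (↑V : Set (EuclideanSpace ℝ (Fin d))) := subset_convexHull ℝ _ hx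
    rw [← hKM] at this
    have := convexHull_mono hE this
    exact (convexHull_subset_affineSpan _) this
  -- pick x ∈ V \ T
  have hex : ∃ x, x ∈ V \ T := by
    have : (V \ T).Nonempty := by
      rw [← Finset.card_pos]
      have h2 := Finset.le_card_sdiff T V
      omega
    exact this
  obtain ⟨x, hx⟩ := hex
  have hxV : x ∈ V := (Finset.mem_sdiff.1 hx).1
  have hxT : x ∉ T := (Finset.mem_sdiff.1 hx).2
  set s : Finset (EuclideanSpace ℝ (Fin d)) := insert x T with hs
  have hsV : (↑s : Set (EuclideanSpace ℝ (Fin d))) ⊆ ↑V := by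
    rw [hs]
    intro y hy
    rcases Finset.mem_insert.1 hy with h | h
    · exact h ▸ hxV
    · exact hGV (hTG h)
  have hscard : s.card ≤ d + 1 := by
    rw [hs]
    have := Finset.card_insert_le x T
    omega
  have ha := hgp s hsV hscard
  have hxs : x ∈ s := Finset.mem_insert_self x T
  have hnot := ha.notMem_affineSpan_sdiff ⟨x, hxs⟩ Set.univ
  apply hnot
  have himg : (↑T : Set (EuclideanSpace ℝ (Fin d))) ⊆
      (fun p : s => (p : EuclideanSpace ℝ (Fin d))) '' (Set.univ \ {⟨x, hxs⟩}) := by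
    intro y hy
    have hyT : y ∈ T := hy
    refine ⟨⟨y, Finset.mem_insert_of_mem hyT⟩, ⟨trivial, ?_⟩, rfl⟩
    simp only [Set.mem_singleton_iff]
    intro h
    apply hxT
    have : y = x := congrArg Subtype.val h
    exact this ▸ hyT
  exact affineSpan_mono ℝ himg (hVspan hxV)

/-- The inner set is determined as the complement. -/
lemma F_det_aux (d : ℕ) (F G V : Finset (EuclideanSpace ℝ (Fin d)))
    (hdisj : Disjoint F G)
    (hFG : (↑F ∪ ↑G : Set (EuclideanSpace ℝ (Fin d))) = ↑V) :
    ∀ x, x ∈ F ↔ x ∈ V ∧ x ∉ G := by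
  intro x
  constructor
  · intro hx
    refine ⟨?_, fun hxG => (Finset.disjoint_left.1 hdisj) hx hxG⟩
    have : x ∈ (↑F ∪ ↑G : Set (EuclideanSpace ℝ (Fin d))) := Or.inl hx
    rw [hFG] at this
    exact this
  · rintro ⟨hxV, hxG⟩
    have : x ∈ (↑F ∪ ↑G : Set (EuclideanSpace ℝ (Fin d))) := by rw [hFG]; exact hxV
    rcases this with h | h
    · exact h
    · exact absurd h hxG

/-- If `V ⊆ ℝ^d` consists of exactly `2(d+1)` points in general position, then
there is at most one partition of `V` into disjoint `(d+1)`-element sets `F, G`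
with `conv(F) ⊆ conv(G)`; moreover, for any such nested partition the outer set
`G` satisfies `conv(G) = conv(V)`. -/
theorem nested_partition_unique (d : ℕ)
    (V : Finset (EuclideanSpace ℝ (Fin d))) (hV : V.card = 2 * (d + 1))
    (hgp : InGeneralPosition d (↑V : Set (EuclideanSpace ℝ (Fin d)))) :
    (∀ F G F' G' : Finset (EuclideanSpace ℝ (Fin d)),
      (Disjoint F G ∧ (↑F ∪ ↑G : Set (EuclideanSpace ℝ (Fin d))) = ↑V ∧ F.card = d + 1 ∧ G.card = d + 1 ∧
        convexHull ℝ (↑F : Set (EuclideanSpace ℝ (Fin d))) ⊆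
          convexHull ℝ (↑G : Set (EuclideanSpace ℝ (Fin d)))) →
      (Disjoint F' G' ∧ (↑F' ∪ ↑G' : Set (EuclideanSpace ℝ (Fin d))) = ↑V ∧ F'.card = d + 1 ∧ G'.card = d + 1 ∧
        convexHull ℝ (↑F' : Set (EuclideanSpace ℝ (Fin d))) ⊆
          convexHull ℝ (↑G' : Set (EuclideanSpace ℝ (Fin d)))) →
      F = F' ∧ G = G') ∧
    (∀ F G : Finset (EuclideanSpace ℝ (Fin d)),
      Disjoint F G → (↑F ∪ ↑G : Set (EuclideanSpace ℝ (Fin d))) = ↑V → F.card = d + 1 → G.card = d + 1 →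
      convexHull ℝ (↑F : Set (EuclideanSpace ℝ (Fin d))) ⊆
        convexHull ℝ (↑G : Set (EuclideanSpace ℝ (Fin d))) →
      convexHull ℝ (↑G : Set (EuclideanSpace ℝ (Fin d))) =
        convexHull ℝ (↑V : Set (EuclideanSpace ℝ (Fin d)))) := by
  constructor
  · rintro F G F' G' ⟨hd, hu, hFc, hGc, hsub⟩ ⟨hd', hu', hF'c, hG'c, hsub'⟩
    have hGeq := outer_hull_eq_aux d F G V hu hsub
    have hG'eq := outer_hull_eq_aux d F' G' V hu' hsub'
    have hGV : (↑G : Set (EuclideanSpace ℝ (Fin d))) ⊆ ↑V := by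
      rw [← hu]; exact subset_union_right
    have hGG' : G = G' := G_unique_aux d V G G' hV hgp hGV hGc hG'c hGeq hG'eq
    refine ⟨?_, hGG'⟩
    ext x
    rw [F_det_aux d F G V hd hu x, F_det_aux d F' G' V hd' hu' x, hGG']
  · intro F G _ hu _ _ hsub
    exact outer_hull_eq_aux d F G V hu hsub
end

section
/- Let T and T' be two disjoint (d+1)-element sets of points in ℝ^d such that T ∪ T' is in general position, and suppose conv(T) ⊆ conv(T'). Then conv(T') is volume-wise the unique largest d-dimensional simplex spanned by d+1 of the points of T ∪ T': for every (d+1)-element subset S of T ∪ T' with S ≠ T', the d-dimensional Lebesgue measure of conv(S) is strictly smaller than the d-dimensional Lebesgue measure of conv(T'). -/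
open MeasureTheory
open Set Metric Filter

/-- If `T, T'` are disjoint `(d+1)`-element sets in `ℝ^d` with `T ∪ T'` in
general position and `conv(T) ⊆ conv(T')`, then `conv(T')` is volume-wise the
unique largest simplex spanned by `d+1` of the points of `T ∪ T'`: every other
`(d+1)`-element subset `S` of `T ∪ T'` spans a simplex of strictly smaller
`d`-dimensional Lebesgue measure. -/
theorem outer_simplex_unique_max_volume (d : ℕ) (hd : 1 ≤ d)
    (T T' : Finset (EuclideanSpace ℝ (Fin d)))
    (hT : T.card = d + 1) (hT' : T'.card = d + 1) (hdisj : Disjoint T T')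
    (hgp : InGeneralPosition d ((↑T ∪ ↑T' : Set (EuclideanSpace ℝ (Fin d)))))
    (hnested : convexHull ℝ (↑T : Set (EuclideanSpace ℝ (Fin d))) ⊆
      convexHull ℝ (↑T' : Set (EuclideanSpace ℝ (Fin d)))) :
    ∀ S : Finset (EuclideanSpace ℝ (Fin d)),
      (↑S : Set (EuclideanSpace ℝ (Fin d))) ⊆ ↑T ∪ ↑T' → S.card = d + 1 → S ≠ T' →
      volume (convexHull ℝ (↑S : Set (EuclideanSpace ℝ (Fin d)))) <
        volume (convexHull ℝ (↑T' : Set (EuclideanSpace ℝ (Fin d)))) := by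
  intro S hSsub hScard hSne
  classical

  -- T' is affinely independent and spans
  have hT'ind : AffineIndependent ℝ (fun p : T' => (p : EuclideanSpace ℝ (Fin d))) :=
    hgp T' (subset_union_right) (by rw [hT'])
  have hrange : Set.range (fun p : T' => (p : EuclideanSpace ℝ (Fin d))) = (↑T' : Set (EuclideanSpace ℝ (Fin d))) := by
    simp [Subtype.range_coe_subtype]
  have htot : affineSpan ℝ (Set.range (fun p : T' => (p : EuclideanSpace ℝ (Fin d)))) = ⊤ := by
    rw [hT'ind.affineSpan_eq_top_iff_card_eq_finrank_add_one]
    simp [hT', finrank_euclideanSpace_fin]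
  let b : AffineBasis T' ℝ (EuclideanSpace ℝ (Fin d)) := ⟨fun p => (p : EuclideanSpace ℝ (Fin d)), hT'ind, htot⟩
  have hb : Set.range ⇑b = (↑T' : Set (EuclideanSpace ℝ (Fin d))) := hrange
  -- every point of S is in conv T'
  have hSsub' : (↑S : Set (EuclideanSpace ℝ (Fin d))) ⊆ convexHull ℝ (↑T' : Set (EuclideanSpace ℝ (Fin d))) := by
    intro x hx
    rcases hSsub hx with h | h
    · exact hnested (subset_convexHull ℝ _ h)
    · exact subset_convexHull ℝ _ h
  have hconvS : convexHull ℝ (↑S : Set (EuclideanSpace ℝ (Fin d))) ⊆ convexHull ℝ (↑T' : Set (EuclideanSpace ℝ (Fin d))) :=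
    convexHull_min hSsub' (convex_convexHull ℝ _)
  -- a vertex of T' not in S
  have : ¬ (T' ⊆ S) := by
    intro h
    exact hSne (Finset.eq_of_subset_of_card_le h (by rw [hT', hScard])).symm
  obtain ⟨t', ht'T', ht'S⟩ := Finset.not_subset.1 this
  set i : T' := ⟨t', ht'T'⟩
  -- all points of conv S have i-th barycentric coordinate < 1
  have hcoordlt : ∀ x ∈ convexHull ℝ (↑S : Set (EuclideanSpace ℝ (Fin d))), b.coord i x < 1 := by
    have hconvex : Convex ℝ {x : EuclideanSpace ℝ (Fin d) | b.coord i x < 1} := by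
      have := (convex_Iio (1 : ℝ)).affine_preimage (b.coord i)
      exact this
    intro x hx
    refine convexHull_min ?_ hconvex hx
    intro s hs
    have hsT' : s ∈ convexHull ℝ (↑T' : Set (EuclideanSpace ℝ (Fin d))) := hSsub' hs
    have hnn : ∀ j, 0 ≤ b.coord j s := by
      rw [← hb, b.convexHull_eq_nonneg_coord] at hsT'
      exact hsT'
    have hsum : ∑ j, b.coord j s = 1 := b.sum_coord_apply_eq_one s
    have hle : b.coord i s ≤ 1 := by
      have := Finset.single_le_sum (f := fun j => b.coord j s) (fun j _ => hnn j)
        (Finset.mem_univ i)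
      linarith [hsum ▸ this]
    rcases lt_or_eq_of_le hle with h | h
    · exact h
    -- coord i s = 1 forces s = t'
    exfalso
    have hrest : ∑ j ∈ Finset.univ.erase i, b.coord j s = 0 := by
      have h2 : b.coord i s + ∑ j ∈ Finset.univ.erase i, b.coord j s = 1 := by
        rw [Finset.add_sum_erase Finset.univ (fun j => b.coord j s) (Finset.mem_univ i)]
        exact hsum
      rw [h] at h2
      linarith
    have hzero : ∀ j ∈ Finset.univ.erase i, b.coord j s = 0 :=
      (Finset.sum_eq_zero_iff_of_nonneg (fun j _ => hnn j)).1 hrest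
    have hst' : s = t' := by
      have : s = b i := by
        apply b.ext_elem
        intro j
        by_cases hj : j = i
        · subst hj; rw [h, b.coord_apply_eq]
        · rw [hzero j (Finset.mem_erase.2 ⟨hj, Finset.mem_univ j⟩), b.coord_apply_ne hj]
      exact this
    exact ht'S (hst' ▸ hs)
  have ht'notin : t' ∉ convexHull ℝ (↑S : Set (EuclideanSpace ℝ (Fin d))) := by
    intro h
    have := hcoordlt t' h
    rw [show t' = b i from rfl, b.coord_apply_eq] at this
    exact lt_irrefl _ this
  -- interior of conv T' is nonempty
  have hint : (interior (convexHull ℝ (↑T' : Set (EuclideanSpace ℝ (Fin d))))).Nonempty := by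
    rw [interior_convexHull_nonempty_iff_affineSpan_eq_top]
    rw [← hrange]; exact htot
  obtain ⟨y, hy⟩ := hint
  -- find z in interior conv T' outside conv S
  have hSclosed : IsClosed (convexHull ℝ (↑S : Set (EuclideanSpace ℝ (Fin d)))) :=
    (S.finite_toSet.isCompact_convexHull ℝ).isClosed
  have hcont : Continuous (fun a : ℝ => a • y + (1 - a) • t') := by continuity
  have hf0 : (fun a : ℝ => a • y + (1 - a) • t') 0 = t' := by simp
  have htend : Tendsto (fun a : ℝ => a • y + (1 - a) • t') (nhds 0)
      (nhds t') := by
    simpa using hcont.tendsto 0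
  have hev : ∀ᶠ a in nhdsWithin 0 (Set.Ioi 0),
      (fun a : ℝ => a • y + (1 - a) • t') a ∈ (convexHull ℝ (↑S : Set (EuclideanSpace ℝ (Fin d))))ᶜ :=
    (htend.eventually (hSclosed.isOpen_compl.eventually_mem ht'notin)).filter_mono
      nhdsWithin_le_nhds
  have hev2 : ∀ᶠ a in nhdsWithin 0 (Set.Ioi 0), a ∈ Set.Ioo (0:ℝ) 1 :=
    Ioo_mem_nhdsGT_of_mem ⟨le_refl 0, one_pos⟩
  obtain ⟨a, hanot, ha01⟩ := (hev.and hev2).exists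
  set z : EuclideanSpace ℝ (Fin d) := a • y + (1 - a) • t' with hz
  have hzint : z ∈ interior (convexHull ℝ (↑T' : Set (EuclideanSpace ℝ (Fin d)))) := by
    rw [hz]
    exact Convex.combo_interior_self_mem_interior (convex_convexHull ℝ _) hy
      (subset_convexHull ℝ _ ht'T') ha01.1 (by linarith [ha01.2]) (by ring)
  -- a ball around z inside conv T' and outside conv S
  have hUopen : IsOpen (interior (convexHull ℝ (↑T' : Set (EuclideanSpace ℝ (Fin d)))) ∩
      (convexHull ℝ (↑S : Set (EuclideanSpace ℝ (Fin d))))ᶜ) := isOpen_interior.inter hSclosed.isOpen_compl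
  have hzU : z ∈ interior (convexHull ℝ (↑T' : Set (EuclideanSpace ℝ (Fin d)))) ∩
      (convexHull ℝ (↑S : Set (EuclideanSpace ℝ (Fin d))))ᶜ := ⟨hzint, hanot⟩
  obtain ⟨r, hr, hball⟩ := Metric.isOpen_iff.1 hUopen z hzU
  -- measure argument
  have hfin : volume (convexHull ℝ (↑T' : Set (EuclideanSpace ℝ (Fin d)))) ≠ ⊤ :=
    (T'.finite_toSet.isCompact_convexHull ℝ).measure_lt_top.ne
  have hdisj2 : Disjoint (convexHull ℝ (↑S : Set (EuclideanSpace ℝ (Fin d)))) (ball z r) := by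
    rw [Set.disjoint_right]
    intro x hx
    exact (hball hx).2
  have hunion : convexHull ℝ (↑S : Set (EuclideanSpace ℝ (Fin d))) ∪ ball z r ⊆ convexHull ℝ (↑T' : Set (EuclideanSpace ℝ (Fin d))) := by
    refine Set.union_subset hconvS ?_
    intro x hx
    exact interior_subset (hball hx).1
  calc volume (convexHull ℝ (↑S : Set (EuclideanSpace ℝ (Fin d))))
      < volume (convexHull ℝ (↑S : Set (EuclideanSpace ℝ (Fin d)))) + volume (ball z r) := by
        refine ENNReal.lt_add_right ?_ (measure_ball_pos volume z hr).ne'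
        exact ((measure_mono hconvS).trans_lt hfin.lt_top).ne
    _ = volume (convexHull ℝ (↑S : Set (EuclideanSpace ℝ (Fin d))) ∪ ball z r) :=
        (measure_union hdisj2 measurableSet_ball).symm
    _ ≤ volume (convexHull ℝ (↑T' : Set (EuclideanSpace ℝ (Fin d)))) := measure_mono hunion
end
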